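/- Let p, q be integers with 1 ≤ p < q and let w = a^{α_0} θ_1 a^{α_1} ⋯ θ_k a^{α_k} (with θ_i ∈ {t, t⁻¹}, α_i ∈ ℤ) be a geodesic word representing its element of BS(p,q). If 0 ≤ i < k and θ_{i+1} = t, then |α_i| < q; and if 1 ≤ j ≤ k and θ_j = t⁻¹, then |α_j| < q. In other words, in a geodesic word a power block a^{α_i} with |α_i| ≥ q can occur only at a local peak. -/

import Mathlib

inductive Letter : Type
  | a | A | t | T
  deriving DecidableEq

def bsRel (p q : ℤ) : Set (FreeGroup Bool) :=
  {FreeGroup.of true * (FreeGroup.of false) ^ p * (FreeGroup.of true)⁻¹ * (FreeGroup.of false) ^ (-q)}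

abbrev BS (p q : ℤ) := PresentedGroup (bsRel p q)

def evalLetter (p q : ℤ) : Letter → BS p q
  | .a => PresentedGroup.of false
  | .A => (PresentedGroup.of false)⁻¹
  | .t => PresentedGroup.of true
  | .T => (PresentedGroup.of true)⁻¹

def eval (p q : ℤ) (w : List Letter) : BS p q := (w.map (evalLetter p q)).prod

def aPow (α : ℤ) : List Letter :=
  if 0 ≤ α then List.replicate α.toNat Letter.a else List.replicate (-α).toNat Letter.A

def Geodesic (p q : ℤ) (w : List Letter) : Prop :=
  ∀ v : List Letter, eval p q v = eval p q w → w.length ≤ v.length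

/-- Ranking of letters in the order `t < T < a < A`. -/
def letterIdx : Letter → ℕ
  | .t => 0
  | .T => 1
  | .a => 2
  | .A => 3

/-- Length-lexicographical strict order on words, with letters ordered `t < T < a < A`. -/
def llLt (u v : List Letter) : Prop :=
  u.length < v.length ∨
    (u.length = v.length ∧ List.Lex (· < ·) (u.map letterIdx) (v.map letterIdx))

/-- `IsLlnf p q v w` : `v` is the length-lexicographical normal form of `w`,
i.e. `v` represents the same element as `w` and no word representing this element
precedes `v` in the length-lexicographical order. -/
def IsLlnf (p q : ℤ) (v w : List Letter) : Prop :=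
  eval p q v = eval p q w ∧ ∀ u : List Letter, eval p q u = eval p q w → ¬ llLt u v

/-- A word contains no factors `a a⁻¹` or `a⁻¹ a`. -/
def Reduced (w : List Letter) : Prop :=
  (∀ u v : List Letter, w ≠ u ++ [Letter.a, Letter.A] ++ v) ∧
  (∀ u v : List Letter, w ≠ u ++ [Letter.A, Letter.a] ++ v)

/-- A word is Britton-reduced: it has no factors `a a⁻¹`, `a⁻¹ a`,
`t a^{pμ} t⁻¹` or `t⁻¹ a^{qμ} t` (with `μ ∈ ℤ`). -/
def BrittonReduced (p q : ℤ) (w : List Letter) : Prop :=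
  Reduced w ∧
  (∀ u v : List Letter, ∀ μ : ℤ, w ≠ u ++ [Letter.t] ++ aPow (p * μ) ++ [Letter.T] ++ v) ∧
  (∀ u v : List Letter, ∀ μ : ℤ, w ≠ u ++ [Letter.T] ++ aPow (q * μ) ++ [Letter.t] ++ v)

/-- The t-sequence of a word: its subsequence of letters from `{t, t⁻¹}`. -/
def tSeq (w : List Letter) : List Letter :=
  w.filter (fun c => c == Letter.t || c == Letter.T)

/-- The geodesic length of a group element: the least length of a word representing it. -/
noncomputable def geodesicLength (p q : ℤ) (g : BS p q) : ℕ :=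
  sInf {n : ℕ | ∃ w : List Letter, eval p q w = g ∧ w.length = n}

/-- A valley: every prefix has height `≤ 0` and the total height is `0`,
where the height of a prefix is (number of `t`'s) − (number of `t⁻¹`'s). -/
def IsValley (w : List Letter) : Prop :=
  (∀ u v : List Letter, w = u ++ v → u.count Letter.t ≤ u.count Letter.T) ∧
  w.count Letter.t = w.count Letter.T


/-- The word `a^{α_0} θ_1 a^{α_1} ⋯ θ_k a^{α_k}`. -/
def buildWord (k : ℕ) (αs : Fin (k + 1) → ℤ) (θs : Fin k → Letter) : List Letter :=
  aPow (αs 0) ++ (List.ofFn fun i : Fin k => θs i :: aPow (αs i.succ)).flatten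


lemma eval_append (p q : ℤ) (u v : List Letter) :
    eval p q (u ++ v) = eval p q u * eval p q v := by
  simp [eval]

lemma eval_aPow (p q : ℤ) (α : ℤ) :
    eval p q (aPow α) = (PresentedGroup.of false : BS p q) ^ α := by
  unfold eval aPow
  split
  · rw [List.map_replicate, List.prod_replicate]
    rw [show evalLetter p q Letter.a = PresentedGroup.of false from rfl]
    rw [← zpow_natCast, Int.toNat_of_nonneg ‹_›]
  · rw [List.map_replicate, List.prod_replicate]
    rw [show evalLetter p q Letter.A = (PresentedGroup.of false :
      BS p q)⁻¹ from rfl]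
    rw [← zpow_natCast, Int.toNat_of_nonneg (by omega), inv_zpow, ← zpow_neg, neg_neg]

lemma length_aPow (α : ℤ) : (aPow α).length = α.natAbs := by
  unfold aPow; split <;> simp <;> omega

lemma eval_t (p q : ℤ) : eval p q [Letter.t] = PresentedGroup.of true := by
  simp [eval, evalLetter]

lemma eval_T (p q : ℤ) : eval p q [Letter.T] = (PresentedGroup.of true : BS p q)⁻¹ := by
  simp [eval, evalLetter]

lemma bs_relation (p q : ℤ) :
    (PresentedGroup.of true : BS p q) * (PresentedGroup.of false) ^ p *
      (PresentedGroup.of true)⁻¹ = (PresentedGroup.of false) ^ q := by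
  have h : ((QuotientGroup.mk (FreeGroup.of true * (FreeGroup.of false) ^ p *
      (FreeGroup.of true)⁻¹ * (FreeGroup.of false) ^ (-q))) : BS p q) = 1 := by
    rw [QuotientGroup.eq_one_iff]
    exact Subgroup.subset_normalClosure rfl
  have h2 : (PresentedGroup.of true : BS p q) * (PresentedGroup.of false) ^ p *
      (PresentedGroup.of true)⁻¹ * (PresentedGroup.of false) ^ (-q) = 1 := by
    exact h
  have := mul_eq_one_iff_eq_inv.mp h2
  rw [this, zpow_neg, inv_inv]

lemma bs_move_t (p q : ℤ) (ε : ℤ) (hε : ε = 1 ∨ ε = -1) :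
    (PresentedGroup.of false : BS p q) ^ (ε * q) * PresentedGroup.of true =
      PresentedGroup.of true * (PresentedGroup.of false) ^ (ε * p) := by
  have hrel := bs_relation p q
  rcases hε with rfl | rfl
  · rw [one_mul, one_mul, ← hrel]; group
  · rw [neg_one_mul, neg_one_mul, zpow_neg, zpow_neg, ← hrel]; group

lemma bs_move_T (p q : ℤ) (ε : ℤ) (hε : ε = 1 ∨ ε = -1) :
    (PresentedGroup.of false : BS p q) ^ (ε * p) * (PresentedGroup.of true)⁻¹ =
      (PresentedGroup.of true)⁻¹ * (PresentedGroup.of false) ^ (ε * q) := by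
  have hrel := bs_relation p q
  rcases hε with rfl | rfl
  · rw [one_mul, one_mul, ← hrel]; group
  · rw [neg_one_mul, neg_one_mul, zpow_neg, zpow_neg, ← hrel]; group

lemma geodesic_t_bound (p q : ℤ) (hp : 1 ≤ p) (hpq : p < q) (c e : List Letter) (α : ℤ)
    (hgeo : Geodesic p q (c ++ aPow α ++ [Letter.t] ++ e)) : |α| < q := by
  by_contra hge
  push_neg at hge
  set x : BS p q := PresentedGroup.of false with hx
  set s : BS p q := PresentedGroup.of true with hs
  obtain ⟨ε, hε, hsign⟩ : ∃ ε : ℤ, (ε = 1 ∨ ε = -1) ∧ q ≤ ε * α := by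
    rcases le_or_gt 0 α with h | h
    · exact ⟨1, Or.inl rfl, by rw [one_mul]; rwa [abs_of_nonneg h] at hge⟩
    · exact ⟨-1, Or.inr rfl, by rw [neg_one_mul]; rwa [abs_of_neg h] at hge⟩
  set v : List Letter := c ++ aPow (α - ε * q) ++ [Letter.t] ++ aPow (ε * p) ++ e with hv
  have heval : eval p q v = eval p q (c ++ aPow α ++ [Letter.t] ++ e) := by
    have L : ∀ g : BS p q, g * x ^ (α - ε * q) * s * x ^ (ε * p) = g * x ^ α * s := by
      intro g
      rw [mul_assoc (g * x ^ (α - ε * q)), ← bs_move_t p q ε hε, ← mul_assoc,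
        mul_assoc g, ← zpow_add, sub_add_cancel]
    simp only [hv, eval_append, eval_aPow, eval_t, ← hx, ← hs, ← mul_assoc]
    rw [L]
  have hlen : v.length < (c ++ aPow α ++ [Letter.t] ++ e).length := by
    simp only [hv, List.length_append, length_aPow, List.length_singleton]
    have h1 : (α - ε * q).natAbs + q.natAbs = α.natAbs := by
      rcases hε with rfl | rfl <;> simp at hsign ⊢ <;> omega
    have h2 : (ε * p).natAbs = p.natAbs := by rcases hε with rfl | rfl <;> simp
    omega
  exact absurd (hgeo v heval) (by omega)

lemma geodesic_T_bound (p q : ℤ) (hp : 1 ≤ p) (hpq : p < q) (c d : List Letter) (β : ℤ)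
    (hgeo : Geodesic p q (c ++ [Letter.T] ++ aPow β ++ d)) : |β| < q := by
  by_contra hge
  push_neg at hge
  set x : BS p q := PresentedGroup.of false with hx
  set s : BS p q := PresentedGroup.of true with hs
  obtain ⟨ε, hε, hsign⟩ : ∃ ε : ℤ, (ε = 1 ∨ ε = -1) ∧ q ≤ ε * β := by
    rcases le_or_gt 0 β with h | h
    · exact ⟨1, Or.inl rfl, by rw [one_mul]; rwa [abs_of_nonneg h] at hge⟩
    · exact ⟨-1, Or.inr rfl, by rw [neg_one_mul]; rwa [abs_of_neg h] at hge⟩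
  set v : List Letter := c ++ aPow (ε * p) ++ [Letter.T] ++ aPow (β - ε * q) ++ d with hv
  have heval : eval p q v = eval p q (c ++ [Letter.T] ++ aPow β ++ d) := by
    have L : ∀ g : BS p q, g * x ^ (ε * p) * s⁻¹ * x ^ (β - ε * q) = g * s⁻¹ * x ^ β := by
      intro g
      rw [mul_assoc g, bs_move_T p q ε hε, ← mul_assoc, mul_assoc (g * s⁻¹),
        ← zpow_add, show ε * q + (β - ε * q) = β by ring]
    simp only [hv, eval_append, eval_aPow, eval_T, ← hx, ← hs, ← mul_assoc]
    rw [L]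
  have hlen : v.length < (c ++ [Letter.T] ++ aPow β ++ d).length := by
    simp only [hv, List.length_append, length_aPow, List.length_singleton]
    have h1 : (β - ε * q).natAbs + q.natAbs = β.natAbs := by
      rcases hε with rfl | rfl <;> simp at hsign ⊢ <;> omega
    have h2 : (ε * p).natAbs = p.natAbs := by rcases hε with rfl | rfl <;> simp
    omega
  exact absurd (hgeo v heval) (by omega)

lemma buildWord_succ (k : ℕ) (αs : Fin (k + 2) → ℤ) (θs : Fin (k + 1) → Letter) :
    buildWord (k + 1) αs θs =
      aPow (αs 0) ++ θs 0 ::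
        buildWord k (fun j => αs j.succ) (fun j => θs j.succ) := by
  simp [buildWord, List.ofFn_succ, Fin.succ_zero_eq_one]

lemma buildWord_split (k : ℕ) (αs : Fin (k + 1) → ℤ) (θs : Fin k → Letter) (i : Fin k) :
    ∃ c d : List Letter, buildWord k αs θs =
      c ++ aPow (αs i.castSucc) ++ [θs i] ++ aPow (αs i.succ) ++ d := by
  induction k with
  | zero => exact absurd i.2 (by omega)
  | succ k ih =>
    induction i using Fin.cases with
    | zero =>
      refine ⟨[], (List.ofFn fun j : Fin k =>
          θs j.succ :: aPow (αs j.succ.succ)).flatten, ?_⟩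
      simp [buildWord, List.ofFn_succ, Fin.succ_zero_eq_one]
    | succ j =>
      obtain ⟨c, d, h⟩ := ih (fun m => αs m.succ) (fun m => θs m.succ) j
      refine ⟨aPow (αs 0) ++ θs 0 :: c, d, ?_⟩
      rw [buildWord_succ, h, ← Fin.succ_castSucc]
      simp

theorem geodesic_small_blocks_off_peaks (p q : ℤ) (hp : 1 ≤ p) (hpq : p < q) (k : ℕ)
    (αs : Fin (k + 1) → ℤ) (θs : Fin k → Letter)
    (hθ : ∀ i, θs i = Letter.t ∨ θs i = Letter.T)
    (hgeo : Geodesic p q (buildWord k αs θs)) :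
    ∀ i : Fin k,
      (θs i = Letter.t → |αs i.castSucc| < q) ∧ (θs i = Letter.T → |αs i.succ| < q) := by
  intro i
  obtain ⟨c, d, h⟩ := buildWord_split k αs θs i
  constructor
  · intro ht
    refine geodesic_t_bound p q hp hpq c (aPow (αs i.succ) ++ d) (αs i.castSucc) ?_
    rw [show c ++ aPow (αs i.castSucc) ++ [Letter.t] ++ (aPow (αs i.succ) ++ d)
        = c ++ aPow (αs i.castSucc) ++ [Letter.t] ++ aPow (αs i.succ) ++ d by
      simp [List.append_assoc], ← ht, ← h]
    exact hgeo
  · intro ht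
    refine geodesic_T_bound p q hp hpq (c ++ aPow (αs i.castSucc)) d (αs i.succ) ?_
    rw [← ht, ← h]
    exact hgeo
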